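/- Let X be a trace-zero real 2×2 matrix with Q(X) = -N det(X) = m < 0, and z a point in the upper half-plane not equal to the point z_X associated to X. Then Q(X_z) = |m| · sinh²(d(z, z_X)), where X_z is the projection of X onto the positive definite plane X(z)^⊥, d denotes hyperbolic distance on the upper half-plane, and z_X is the Heegner point of the binary quadratic form corresponding to X. -/

import Mathlib

open Matrix

/-- The matrix `X(z) = (1/(√N·y))·(-x, |z|²; -1, x)` for `z = x + iy`. -/
noncomputable def Xmat (N : ℕ) (z : ℂ) : Matrix (Fin 2) (Fin 2) ℝ :=
  (1 / (Real.sqrt N * z.im)) • !![-z.re, Complex.normSq z; -1, z.re]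

/-- Orthogonal projection of `X` onto the line `ℝ·X(z)`, with respect to the
bilinear form `(A,B) = N·tr(AB)`. -/
noncomputable def projNeg (N : ℕ) (z : ℂ) (X : Matrix (Fin 2) (Fin 2) ℝ) :
    Matrix (Fin 2) (Fin 2) ℝ :=
  (((N : ℝ) * (X * Xmat N z).trace) / ((N : ℝ) * (Xmat N z * Xmat N z).trace)) • Xmat N z

set_option maxHeartbeats 1000000

/-- For `X = (b/2N, c/N; -a, -b/2N)` with `Q(X) = m < 0`, Heegner point `z_X`
(the root of `aN x² + bx + c` in the upper half-plane) and any `z ≠ z_X` in the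
upper half-plane: `Q(X_z) = |m|·sinh²(d(z, z_X))`, where `d` is the hyperbolic
distance, characterized by `cosh d(z,w) = 1 + |z-w|²/(2 Im z Im w)`. -/
theorem stmt_17 (N : ℕ) (hN : 0 < N) (a b c : ℝ) (m : ℝ)
    (X : Matrix (Fin 2) (Fin 2) ℝ)
    (hX : X = !![b / (2 * N), c / N; -a, -b / (2 * N)])
    (hm : m = -(N : ℝ) * X.det) (hmneg : m < 0)
    (w : ℂ) (hw : 0 < w.im)
    (hroot : (a * N : ℂ) * w ^ 2 + (b : ℂ) * w + (c : ℂ) = 0)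
    (z : ℂ) (hz : 0 < z.im) (hzw : z ≠ w)
    (d : ℝ) (hd : 0 ≤ d)
    (hcosh : Real.cosh d = 1 + ‖z - w‖ ^ 2 / (2 * z.im * w.im)) :
    -(N : ℝ) * (X - projNeg N z X).det = |m| * Real.sinh d ^ 2 := by
  have hy : z.im ≠ 0 := ne_of_gt hz
  have hv : w.im ≠ 0 := ne_of_gt hw
  have hNpos : (0:ℝ) < N := by exact_mod_cast hN
  have hN0 : (N:ℝ) ≠ 0 := ne_of_gt hNpos
  have hs0 : Real.sqrt N ≠ 0 := by positivity
  have hsq : Real.sqrt N * Real.sqrt N = N := Real.mul_self_sqrt hNpos.le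
  -- root equations
  rw [Complex.ext_iff] at hroot
  obtain ⟨hre, him⟩ := hroot
  simp [pow_two, Complex.mul_re, Complex.mul_im, Complex.add_re, Complex.add_im] at hre him
  have hb : b = -(2*a*N*w.re) := by
    have h2 : w.im * (2*(a*N*w.re) + b) = 0 := by nlinarith [him]
    rcases mul_eq_zero.1 h2 with h|h
    · exact absurd h hv
    · linarith
  have hc : c = a*N*(w.re^2+w.im^2) := by
    rw [hb] at hre; nlinarith [hre]
  have hmval : m = -(a^2*N*w.im^2) := by
    rw [hm, hX]
    simp [Matrix.det_fin_two_of]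
    field_simp
    rw [hb, hc]; ring
  have habs : |m| = a^2*N*w.im^2 := by rw [abs_of_neg hmneg, hmval]; ring
  have hsinh : Real.sinh d ^ 2 = (Real.cosh d - 1) * (Real.cosh d + 1) := by
    nlinarith [Real.sinh_sq d]
  have habz : ‖z-w‖^2 = (z.re - w.re)^2 + (z.im - w.im)^2 := by
    rw [Complex.sq_norm, Complex.normSq_apply]; simp [pow_two]
  have key : (N : ℝ) * (Xmat N z * Xmat N z).trace = -2 := by
    simp [Xmat, Matrix.trace_fin_two, Matrix.mul_apply, Fin.sum_univ_two, Complex.normSq_apply]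
    field_simp
    nlinarith [hsq, sq_nonneg z.im]
  rw [habs, hsinh, hcosh, habz, hX]
  unfold projNeg
  rw [key]
  simp only [Xmat, Matrix.trace_fin_two, Matrix.mul_apply, Fin.sum_univ_two,
    Matrix.smul_apply, Matrix.sub_apply, Matrix.det_fin_two, Complex.normSq_apply,
    Matrix.cons_val', Matrix.cons_val_zero, Matrix.cons_val_one, Matrix.head_cons,
    Matrix.head_fin_const, Matrix.empty_val', Matrix.cons_val_fin_one, smul_eq_mul, Matrix.of_apply]
  rw [hb, hc]
  set s := Real.sqrt (N:ℝ) with hsdef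
  rw [← hsq]
  field_simp
  ring
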